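/- Solutions of the model with positive initial data remain positive: if C, L, T : [t₀, t₁] → ℝ are differentiable and satisfy C' = ρ_C(T+L+C)C − C/τ_C − αC², L' = ρ_L L − αLC, T' = −αTC on [t₀, t₁], with C(t₀) > 0, L(t₀) > 0, T(t₀) > 0, then C(t) > 0, L(t) > 0 and T(t) > 0 for all t ∈ [t₀, t₁]. -/

import Mathlib

open Set

/-- If `|f'| ≤ K |f|` on `[a,b]` and `f a > 0`, then `f > 0` on `[a,b]`. -/
lemma pos_of_linear_deriv_bound {a b K : ℝ} {f f' : ℝ → ℝ}
    (hf : ∀ t ∈ Set.Icc a b, HasDerivAt f (f' t) t)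
    (hbound : ∀ t ∈ Set.Icc a b, |f' t| ≤ K * |f t|)
    (ha : 0 < f a) : ∀ t ∈ Set.Icc a b, 0 < f t := by
  intro t ht
  by_contra hcon
  push_neg at hcon
  have hat : a ≤ t := ht.1
  have hsub : Set.Icc a t ⊆ Set.Icc a b := Set.Icc_subset_Icc le_rfl ht.2
  have hcont : ContinuousOn f (Set.Icc a t) := fun x hx =>
    ((hf x (hsub hx)).continuousAt).continuousWithinAt
  -- f vanishes somewhere on [a, t]
  have h0 : (0 : ℝ) ∈ Set.Icc (f t) (f a) := ⟨hcon, ha.le⟩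
  obtain ⟨s, hs, hfs⟩ := intermediate_value_Icc' hat hcont h0
  -- time-reversed function g x = f (a + s - x)
  set g : ℝ → ℝ := fun x => f (a + s - x) with hg
  have hmap : ∀ x ∈ Set.Icc a s, a + s - x ∈ Set.Icc a b := by
    intro x hx
    have h1 : a ≤ a + s - x := by linarith [hx.2]
    have h2 : a + s - x ≤ b := by
      have : a + s - x ≤ s := by linarith [hx.1]
      exact this.trans (hs.2.trans ht.2)
    exact ⟨h1, h2⟩
  have hgderiv : ∀ x ∈ Set.Icc a s, HasDerivAt g (-(f' (a + s - x))) x := by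
    intro x hx
    have h1 : HasDerivAt (fun y : ℝ => a + s - y) (-1) x := by
      simpa using (hasDerivAt_id x).const_sub (a + s)
    have h2 := (hf (a + s - x) (hmap x hx)).comp x h1
    simpa [mul_comm, hg, Function.comp_def] using h2
  have key := norm_le_gronwallBound_of_norm_deriv_right_le (f := g)
      (f' := fun x => -(f' (a + s - x))) (δ := 0) (K := K) (ε := 0) (a := a) (b := s)
      (fun x hx => ((hgderiv x hx).continuousAt).continuousWithinAt)
      (fun x hx => ((hgderiv x (Set.Ico_subset_Icc_self hx)).hasDerivWithinAt))
      (by simp [hg, hfs])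
      (by
        intro x hx
        have hx' := Set.Ico_subset_Icc_self hx
        have := hbound (a + s - x) (hmap x hx')
        simpa [hg, Real.norm_eq_abs] using this)
  have hgs := key s ⟨hs.1, le_rfl⟩
  rw [gronwallBound_ε0_δ0] at hgs
  have : g s = f a := by simp [hg]
  rw [this, Real.norm_eq_abs] at hgs
  have : f a = 0 := abs_eq_zero.mp (le_antisymm hgs (abs_nonneg _))
  linarith

/-- Solutions of the CAR-T/leukemia/normal T-cell model with
positive initial data remain positive on `[t₀, t₁]`. -/
theorem carT_model_positivity
    (ρC ρL α τC : ℝ) (hρC : 0 < ρC) (hρL : 0 < ρL) (hα : 0 < α) (hτC : 0 < τC)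
    (t₀ t₁ : ℝ) (C L T : ℝ → ℝ)
    (hC : ∀ t ∈ Set.Icc t₀ t₁,
      HasDerivAt C (ρC * (T t + L t + C t) * C t - C t / τC - α * (C t) ^ 2) t)
    (hL : ∀ t ∈ Set.Icc t₀ t₁, HasDerivAt L (ρL * L t - α * L t * C t) t)
    (hT : ∀ t ∈ Set.Icc t₀ t₁, HasDerivAt T (-(α * T t * C t)) t)
    (hC0 : 0 < C t₀) (hL0 : 0 < L t₀) (hT0 : 0 < T t₀) :
    ∀ t ∈ Set.Icc t₀ t₁, 0 < C t ∧ 0 < L t ∧ 0 < T t := by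
  -- continuity and bounds
  have hCc : ContinuousOn C (Set.Icc t₀ t₁) := fun x hx =>
    ((hC x hx).continuousAt).continuousWithinAt
  have hLc : ContinuousOn L (Set.Icc t₀ t₁) := fun x hx =>
    ((hL x hx).continuousAt).continuousWithinAt
  have hTc : ContinuousOn T (Set.Icc t₀ t₁) := fun x hx =>
    ((hT x hx).continuousAt).continuousWithinAt
  obtain ⟨MC, hMC⟩ := isCompact_Icc.exists_bound_of_continuousOn hCc
  obtain ⟨ML, hML⟩ := isCompact_Icc.exists_bound_of_continuousOn hLc
  obtain ⟨MT, hMT⟩ := isCompact_Icc.exists_bound_of_continuousOn hTc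
  set M : ℝ := max 0 (max MC (max ML MT)) with hM
  have hM0 : 0 ≤ M := le_max_left _ _
  have hCb : ∀ x ∈ Set.Icc t₀ t₁, |C x| ≤ M := fun x hx =>
    (hMC x hx).trans (le_max_of_le_right (le_max_left _ _))
  have hLb : ∀ x ∈ Set.Icc t₀ t₁, |L x| ≤ M := fun x hx =>
    (hML x hx).trans (le_max_of_le_right (le_max_of_le_right (le_max_left _ _)))
  have hTb : ∀ x ∈ Set.Icc t₀ t₁, |T x| ≤ M := fun x hx =>
    (hMT x hx).trans (le_max_of_le_right (le_max_of_le_right (le_max_right _ _)))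
  set K : ℝ := ρC * (3 * M) + 1 / τC + α * M + ρL with hK
  have hτ' : 0 < 1 / τC := by positivity
  -- positivity of C
  have hCpos : ∀ t ∈ Set.Icc t₀ t₁, 0 < C t := by
    apply pos_of_linear_deriv_bound (K := K) hC _ hC0
    intro x hx
    have hC' : ρC * (T x + L x + C x) * C x - C x / τC - α * (C x) ^ 2
        = (ρC * (T x + L x + C x) - 1 / τC - α * C x) * C x := by ring
    rw [hC', abs_mul]
    apply mul_le_mul_of_nonneg_right _ (abs_nonneg _)
    have h1 := hCb x hx; have h2 := hLb x hx; have h3 := hTb x hx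
    rw [abs_le] at h1 h2 h3 ⊢
    constructor <;> nlinarith [h1.1, h1.2, h2.1, h2.2, h3.1, h3.2, hρL.le, hα.le, hτ'.le,
      mul_le_mul_of_nonneg_left h1.2 hρC.le, mul_le_mul_of_nonneg_left h1.1 hρC.le,
      mul_le_mul_of_nonneg_left h2.2 hρC.le, mul_le_mul_of_nonneg_left h2.1 hρC.le,
      mul_le_mul_of_nonneg_left h3.2 hρC.le, mul_le_mul_of_nonneg_left h3.1 hρC.le,
      mul_le_mul_of_nonneg_left h1.2 hα.le, mul_le_mul_of_nonneg_left h1.1 hα.le]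
  -- positivity of L
  have hLpos : ∀ t ∈ Set.Icc t₀ t₁, 0 < L t := by
    apply pos_of_linear_deriv_bound (K := K) hL _ hL0
    intro x hx
    have hL' : ρL * L x - α * L x * C x = (ρL - α * C x) * L x := by ring
    rw [hL', abs_mul]
    apply mul_le_mul_of_nonneg_right _ (abs_nonneg _)
    have h1 := hCb x hx
    rw [abs_le] at h1 ⊢
    rw [hK]
    have e1 := mul_le_mul_of_nonneg_left h1.2 hα.le
    have e2 := mul_le_mul_of_nonneg_left h1.1 hα.le
    have e3 : (0:ℝ) ≤ ρC * (3 * M) := by positivity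
    constructor <;> linarith [hρL.le, hτ'.le]
  -- positivity of T
  have hTpos : ∀ t ∈ Set.Icc t₀ t₁, 0 < T t := by
    apply pos_of_linear_deriv_bound (K := K) hT _ hT0
    intro x hx
    have hT' : -(α * T x * C x) = (-(α * C x)) * T x := by ring
    rw [hT', abs_mul]
    apply mul_le_mul_of_nonneg_right _ (abs_nonneg _)
    have h1 := hCb x hx
    rw [abs_le] at h1 ⊢
    rw [hK]
    have e1 := mul_le_mul_of_nonneg_left h1.2 hα.le
    have e2 := mul_le_mul_of_nonneg_left h1.1 hα.le
    have e3 : (0:ℝ) ≤ ρC * (3 * M) := by positivity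
    constructor <;> linarith [hρL.le, hτ'.le]
  exact fun t ht => ⟨hCpos t ht, hLpos t ht, hTpos t ht⟩
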